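/- For any compact metric space (X,d) and continuous map T: X → X, the function Ē(x,y) = limsup_{n→∞} min_{σ∈S_n} (1/n) Σ_{k=0}^{n-1} d(T^k(x), T^{σ(k)}(y)) is a pseudo-metric on X, i.e., it is nonnegative, symmetric, satisfies Ē(x,x)=0 and the triangle inequality. -/
import Mathlib


open Filter MeasureTheory Topology

/-- `Ē_n(x,y) = min_{σ∈S_n} (1/n) Σ_{k=0}^{n-1} d(T^k x, T^{σ(k)} y)`. -/
noncomputable def EnDist {X : Type*} [MetricSpace X] (T : X → X) (n : ℕ) (x y : X) : ℝ :=
  ⨅ σ : Equiv.Perm (Fin n), (1 / (n : ℝ)) * ∑ k : Fin n, dist (T^[(k : ℕ)] x) (T^[((σ k) : ℕ)] y)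

/-- The mean orbital pseudo-metric `Ē(x,y) = limsup_n Ē_n(x,y)`. -/
noncomputable def Ebar {X : Type*} [MetricSpace X] (T : X → X) (x y : X) : ℝ :=
  Filter.limsup (fun n => EnDist T n x y) Filter.atTop

section aux
variable {X : Type*} [MetricSpace X] (T : X → X) (n : ℕ) (x y z : X)

lemma enDist_nonneg : 0 ≤ EnDist T n x y := by
  apply Real.iInf_nonneg
  intro σ
  positivity

lemma enDist_le (σ : Equiv.Perm (Fin n)) :
    EnDist T n x y ≤ (1 / (n : ℝ)) * ∑ k : Fin n, dist (T^[(k : ℕ)] x) (T^[((σ k) : ℕ)] y) := by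
  apply ciInf_le
  exact ⟨0, by rintro r ⟨τ, rfl⟩; positivity⟩

lemma enDist_self : EnDist T n x x = 0 := by
  refine le_antisymm ?_ (enDist_nonneg T n x x)
  have h := enDist_le T n x x (Equiv.refl _)
  simpa using h

lemma enDist_symm : EnDist T n x y = EnDist T n y x := by
  have key : ∀ (a b : X), EnDist T n a b ≤ EnDist T n b a := by
    intro a b
    refine le_ciInf fun σ => ?_
    have h := enDist_le T n a b σ.symm
    refine h.trans_eq ?_
    congr 1
    rw [← Equiv.sum_comp σ (fun k => dist (T^[(k : ℕ)] a) (T^[((σ.symm k) : ℕ)] b))]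
    simp [dist_comm]
  exact le_antisymm (key x y) (key y x)

lemma enDist_triangle : EnDist T n x z ≤ EnDist T n x y + EnDist T n y z := by
  obtain ⟨σ, hσ⟩ := Finite.exists_min
    (fun σ : Equiv.Perm (Fin n) => (1 / (n : ℝ)) * ∑ k : Fin n, dist (T^[(k : ℕ)] x) (T^[((σ k) : ℕ)] y))
  obtain ⟨τ, hτ⟩ := Finite.exists_min
    (fun τ : Equiv.Perm (Fin n) => (1 / (n : ℝ)) * ∑ k : Fin n, dist (T^[(k : ℕ)] y) (T^[((τ k) : ℕ)] z))
  have hxy : EnDist T n x y = _ := le_antisymm (enDist_le T n x y σ) (le_ciInf hσ)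
  have hyz : EnDist T n y z = _ := le_antisymm (enDist_le T n y z τ) (le_ciInf hτ)
  calc EnDist T n x z ≤ (1 / (n : ℝ)) * ∑ k : Fin n, dist (T^[(k : ℕ)] x) (T^[(((τ * σ) k) : ℕ)] z) :=
        enDist_le T n x z (τ * σ)
    _ ≤ EnDist T n x y + EnDist T n y z := by
        rw [hxy, hyz, ← mul_add]
        apply mul_le_mul_of_nonneg_left _ (by positivity)
        have hre : ∑ k : Fin n, dist (T^[(k : ℕ)] y) (T^[((τ k) : ℕ)] z)
            = ∑ k : Fin n, dist (T^[((σ k) : ℕ)] y) (T^[((τ (σ k)) : ℕ)] z) :=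
          (Equiv.sum_comp σ (fun k => dist (T^[(k : ℕ)] y) (T^[((τ k) : ℕ)] z))).symm
        calc ∑ k : Fin n, dist (T^[(k : ℕ)] x) (T^[(((τ * σ) k) : ℕ)] z)
            ≤ ∑ k : Fin n, (dist (T^[(k : ℕ)] x) (T^[((σ k) : ℕ)] y)
                + dist (T^[((σ k) : ℕ)] y) (T^[((τ (σ k)) : ℕ)] z)) :=
              Finset.sum_le_sum fun k _ => dist_triangle _ _ _
          _ = _ := by rw [Finset.sum_add_distrib, ← hre]

lemma enDist_le_diam [CompactSpace X] : EnDist T n x y ≤ Metric.diam (Set.univ : Set X) := by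
  have hb : Bornology.IsBounded (Set.univ : Set X) := isCompact_univ.isBounded
  rcases Nat.eq_zero_or_pos n with rfl | hn
  · simpa [EnDist] using Metric.diam_nonneg
  · refine (enDist_le T n x y (Equiv.refl _)).trans ?_
    have hsum : ∑ k : Fin n, dist (T^[(k : ℕ)] x) (T^[(k : ℕ)] y)
        ≤ ∑ _k : Fin n, Metric.diam (Set.univ : Set X) :=
      Finset.sum_le_sum fun k _ => Metric.dist_le_diam_of_mem hb trivial trivial
    calc (1 / (n : ℝ)) * ∑ k : Fin n, dist (T^[(k : ℕ)] x) (T^[((Equiv.refl _ k : Fin n) : ℕ)] y)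
        ≤ (1 / (n : ℝ)) * (n * Metric.diam (Set.univ : Set X)) := by
          apply mul_le_mul_of_nonneg_left _ (by positivity)
          simpa using hsum
      _ = Metric.diam (Set.univ : Set X) := by
          field_simp

end aux

/-- `Ē` is a pseudo-metric: nonnegative, vanishing on the diagonal,
symmetric and satisfying the triangle inequality. -/
theorem Ebar_is_pseudometric {X : Type*} [MetricSpace X] [CompactSpace X]
    (T : X → X) (hT : Continuous T) :
    (∀ x y : X, 0 ≤ Ebar T x y) ∧
    (∀ x : X, Ebar T x x = 0) ∧
    (∀ x y : X, Ebar T x y = Ebar T y x) ∧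
    (∀ x y z : X, Ebar T x z ≤ Ebar T x y + Ebar T y z) := by
  set C := Metric.diam (Set.univ : Set X) with hC
  have hbdd : ∀ x y : X, IsBoundedUnder (· ≤ ·) atTop (fun n => EnDist T n x y) :=
    fun x y => isBoundedUnder_of ⟨C, fun n => enDist_le_diam T n x y⟩
  have hbdd' : ∀ x y : X, IsBoundedUnder (· ≥ ·) atTop (fun n => EnDist T n x y) :=
    fun x y => isBoundedUnder_of ⟨0, fun n => enDist_nonneg T n x y⟩
  have hnn : ∀ x y : X, 0 ≤ Ebar T x y := by
    intro x y
    exact le_limsup_of_frequently_le (Frequently.of_forall fun n => enDist_nonneg T n x y)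
      (hbdd x y)
  refine ⟨hnn, ?_, ?_, ?_⟩
  · intro x
    simp only [Ebar]
    have : (fun n => EnDist T n x x) = fun _ => (0 : ℝ) := by
      funext n; exact enDist_self T n x
    rw [this, limsup_const]
  · intro x y
    simp only [Ebar]
    congr 1
    funext n
    exact enDist_symm T n x y
  · intro x y z
    have h1 : Ebar T x z ≤ limsup ((fun n => EnDist T n x y) + (fun n => EnDist T n y z)) atTop := by
      exact limsup_le_limsup (Eventually.of_forall fun n => enDist_triangle T n x y z)
        (hbdd' x z).isCoboundedUnder_le (isBoundedUnder_le_add (hbdd x y) (hbdd y z))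
    refine h1.trans (limsup_add_le (hbdd' x y) (hbdd x y) ((hbdd' y z).isCobounded_le) (hbdd y z))
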